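/- arXiv:2112.13246 — 4 statements merged into one kernel-verified Lean document; each statement's English description precedes it below -/
import Mathlib

section
/- For any L-smooth and μ-strongly convex function h on R^d and any points x, y, z in R^d: ⟨∇h(x), z − y⟩ ≥ h(z) − h(y) + (μ/4)‖y − z‖² − L‖z − x‖². -/
open scoped RealInnerProductSpace

section Aux

variable {d : ℕ}

private lemma line_hasDerivAt (h : EuclideanSpace ℝ (Fin d) → ℝ)
    (h' : EuclideanSpace ℝ (Fin d) → EuclideanSpace ℝ (Fin d))
    (hgrad : ∀ x, HasGradientAt h (h' x) x) (a v : EuclideanSpace ℝ (Fin d)) (t : ℝ) :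
    HasDerivAt (fun s : ℝ => h (a + s • v)) ⟪h' (a + t • v), v⟫ t := by
  have h1 : HasDerivAt (fun s : ℝ => a + s • v) v t := by
    simpa using ((hasDerivAt_id t).smul_const v).const_add a
  have h2 := (hgrad (a + t • v)).hasFDerivAt.comp_hasDerivAt t h1
  simpa [InnerProductSpace.toDual_apply_apply, Function.comp_def] using h2

/-- Strong convexity gradient inequality. -/
private lemma strong_convex_grad (μ : ℝ)
    (h : EuclideanSpace ℝ (Fin d) → ℝ)
    (h' : EuclideanSpace ℝ (Fin d) → EuclideanSpace ℝ (Fin d))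
    (hgrad : ∀ x, HasGradientAt h (h' x) x)
    (hsc : ConvexOn ℝ Set.univ (fun x => h x - μ / 2 * ‖x‖ ^ 2))
    (a b : EuclideanSpace ℝ (Fin d)) :
    ⟪h' a, b - a⟫ ≤ h b - h a - μ / 2 * ‖b - a‖ ^ 2 := by
  set v := b - a with hv
  have hb' : a + v = b := by rw [hv]; abel
  have hbsq : ‖b‖ ^ 2 = ‖a‖ ^ 2 + 2 * ⟪a, v⟫ + ‖v‖ ^ 2 := by
    rw [← hb', norm_add_sq_real]
  set φ : ℝ → ℝ := fun t =>
    h (a + t • v) - μ / 2 * (‖a‖ ^ 2 + 2 * (t * ⟪a, v⟫) + t ^ 2 * ‖v‖ ^ 2) with hφ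
  have hφeq : ∀ t : ℝ, φ t = h (a + t • v) - μ / 2 * ‖a + t • v‖ ^ 2 := by
    intro t
    have hns : ‖a + t • v‖ ^ 2 = ‖a‖ ^ 2 + 2 * (t * ⟪a, v⟫) + t ^ 2 * ‖v‖ ^ 2 := by
      rw [norm_add_sq_real, real_inner_smul_right, norm_smul, Real.norm_eq_abs, mul_pow, sq_abs]
    rw [hφ, hns]
  have e0 : φ 0 = h a - μ / 2 * ‖a‖ ^ 2 := by
    rw [hφeq 0]; norm_num
  have e1 : φ 1 = h b - μ / 2 * ‖b‖ ^ 2 := by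
    rw [hφeq 1, one_smul, hb']
  -- derivative of φ at 0
  have hD : HasDerivAt φ (⟪h' a, v⟫ - μ / 2 * (2 * ⟪a, v⟫)) 0 := by
    have h1 := line_hasDerivAt h h' hgrad a v 0
    simp only [zero_smul, add_zero] at h1
    have h2 : HasDerivAt (fun t : ℝ => μ / 2 * (‖a‖ ^ 2 + 2 * (t * ⟪a, v⟫) + t ^ 2 * ‖v‖ ^ 2))
        (μ / 2 * (2 * ⟪a, v⟫)) 0 := by
      have h3 : HasDerivAt (fun t : ℝ => ‖a‖ ^ 2 + 2 * (t * ⟪a, v⟫) + t ^ 2 * ‖v‖ ^ 2)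
          (0 + 2 * ⟪a, v⟫ + 0) 0 := by
        have ha : HasDerivAt (fun _ : ℝ => ‖a‖ ^ 2) 0 0 := hasDerivAt_const 0 _
        have hb : HasDerivAt (fun t : ℝ => 2 * (t * ⟪a, v⟫)) (2 * ⟪a, v⟫) 0 := by
          simpa using ((hasDerivAt_id (0:ℝ)).mul_const ⟪a, v⟫).const_mul 2
        have hc : HasDerivAt (fun t : ℝ => t ^ 2 * ‖v‖ ^ 2) 0 0 := by
          simpa using (hasDerivAt_pow 2 (0:ℝ)).mul_const (‖v‖ ^ 2)
        exact (ha.add hb).add hc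
      simpa using h3.const_mul (μ / 2)
    exact h1.sub h2
  -- convexity : φ t ≤ φ 0 + t * (φ 1 - φ 0) on (0,1]
  have hconv : ∀ t : ℝ, t ∈ Set.Ioc (0:ℝ) 1 → φ t ≤ φ 0 + t * (φ 1 - φ 0) := by
    intro t ht
    have hmem : a + t • v = (1 - t) • a + t • b := by
      rw [hv, sub_smul, one_smul, smul_sub]; abel
    have hcx := hsc.2 (Set.mem_univ a) (Set.mem_univ b)
      (by linarith [ht.2] : (0:ℝ) ≤ 1 - t) (le_of_lt ht.1) (by ring)
    rw [← hmem] at hcx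
    simp only [smul_eq_mul] at hcx
    rw [hφeq t, e0, e1]
    nlinarith [hcx]
  -- derivative at 0 is ≤ slope bound
  have hslope := hasDerivAt_iff_tendsto_slope.mp hD
  have h2 : Filter.Tendsto (slope φ 0) (nhdsWithin 0 (Set.Ioi 0))
      (nhds (⟪h' a, v⟫ - μ / 2 * (2 * ⟪a, v⟫))) :=
    hslope.mono_left (nhdsWithin_mono 0 (fun t ht => ne_of_gt ht))
  have hle : ⟪h' a, v⟫ - μ / 2 * (2 * ⟪a, v⟫) ≤ φ 1 - φ 0 := by
    refine le_of_tendsto h2 ?_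
    filter_upwards [Ioc_mem_nhdsGT_of_mem (by norm_num : (0:ℝ) ∈ Set.Ico 0 1)] with t ht
    have h0 := hconv t ht
    have ht0 : (0:ℝ) < t := ht.1
    have hs : slope φ 0 t = (φ t - φ 0) / t := by simp [slope_def_field]
    rw [hs, div_le_iff₀ ht0]
    nlinarith [h0]
  rw [e0, e1, hbsq] at hle
  linarith [hle]

/-- Descent lemma. -/
private lemma descent (L : ℝ) (hL : 0 ≤ L)
    (h : EuclideanSpace ℝ (Fin d) → ℝ)
    (h' : EuclideanSpace ℝ (Fin d) → EuclideanSpace ℝ (Fin d))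
    (hgrad : ∀ x, HasGradientAt h (h' x) x)
    (hsmooth : ∀ x y, ‖h' x - h' y‖ ≤ L * ‖x - y‖)
    (a b : EuclideanSpace ℝ (Fin d)) :
    h b ≤ h a + ⟪h' a, b - a⟫ + L / 2 * ‖b - a‖ ^ 2 := by
  set v := b - a with hv
  have hb' : a + v = b := by rw [hv]; abel
  set c := ⟪h' a, v⟫ with hc
  set ψ : ℝ → ℝ := fun t => h (a + t • v) - t * c - L / 2 * t ^ 2 * ‖v‖ ^ 2 with hψ
  have hder : ∀ t : ℝ, HasDerivAt ψ (⟪h' (a + t • v), v⟫ - c - L / 2 * (2 * t) * ‖v‖ ^ 2) t := by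
    intro t
    have h1 := line_hasDerivAt h h' hgrad a v t
    have h2 : HasDerivAt (fun t : ℝ => t * c) c t := by
      simpa using (hasDerivAt_id t).mul_const c
    have h3 : HasDerivAt (fun t : ℝ => L / 2 * t ^ 2 * ‖v‖ ^ 2) (L / 2 * (2 * t) * ‖v‖ ^ 2) t := by
      have h4 := ((hasDerivAt_pow 2 t).const_mul (L / 2)).mul_const (‖v‖ ^ 2)
      have h5 : (fun t : ℝ => L / 2 * t ^ 2 * ‖v‖ ^ 2) = fun t : ℝ => L / 2 * t ^ 2 * ‖v‖ ^ 2 :=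
        rfl
      simpa [pow_one, mul_comm, mul_assoc, mul_left_comm] using h4
    exact (h1.sub h2).sub h3
  have hanti : AntitoneOn ψ (Set.Icc 0 1) := by
    apply antitoneOn_of_deriv_nonpos (convex_Icc 0 1)
    · exact fun t _ => ((hder t).differentiableAt).continuousAt.continuousWithinAt
    · intro t ht
      rw [interior_Icc] at ht
      exact ((hder t).differentiableAt).differentiableWithinAt
    · intro t ht
      rw [interior_Icc] at ht
      rw [(hder t).deriv]
      have hinner : ⟪h' (a + t • v), v⟫ - c = ⟪h' (a + t • v) - h' a, v⟫ := by
        rw [inner_sub_left, hc]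
      have hcs : ⟪h' (a + t • v) - h' a, v⟫ ≤ ‖h' (a + t • v) - h' a‖ * ‖v‖ :=
        real_inner_le_norm _ _
      have hsm : ‖h' (a + t • v) - h' a‖ ≤ L * (t * ‖v‖) := by
        have h6 := hsmooth (a + t • v) a
        simpa [add_sub_cancel_left, norm_smul, abs_of_pos ht.1, mul_assoc] using h6
      have hv0 : (0:ℝ) ≤ ‖v‖ := norm_nonneg _
      nlinarith [hcs, hsm, hinner, ht.1.le]
  have key := hanti (Set.mem_Icc.mpr ⟨le_refl 0, zero_le_one⟩)
    (Set.mem_Icc.mpr ⟨zero_le_one, le_refl 1⟩) zero_le_one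
  have e0 : ψ 0 = h a := by rw [hψ]; norm_num
  have e1 : ψ 1 = h b - c - L / 2 * ‖v‖ ^ 2 := by
    rw [hψ]; simp only [one_smul, hb', one_pow, one_mul, mul_one]
  rw [e0, e1] at key
  linarith [key]

end Aux

theorem perturbed_strong_convexity {d : ℕ} (L μ : ℝ) (hμ : 0 ≤ μ) (hLμ : μ ≤ L)
    (h : EuclideanSpace ℝ (Fin d) → ℝ)
    (h' : EuclideanSpace ℝ (Fin d) → EuclideanSpace ℝ (Fin d))
    (hgrad : ∀ x, HasGradientAt h (h' x) x)
    (hsmooth : ∀ x y, ‖h' x - h' y‖ ≤ L * ‖x - y‖)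
    (hsc : ConvexOn ℝ Set.univ (fun x => h x - μ / 2 * ‖x‖ ^ 2))
    (x y z : EuclideanSpace ℝ (Fin d)) :
    h z - h y + μ / 4 * ‖y - z‖ ^ 2 - L * ‖z - x‖ ^ 2 ≤ ⟪h' x, z - y⟫ := by
  have hL : (0:ℝ) ≤ L := le_trans hμ hLμ
  have A := strong_convex_grad μ h h' hgrad hsc x y
  have B := descent L hL h h' hgrad hsmooth x z
  have hsplit : ⟪h' x, z - y⟫ = ⟪h' x, z - x⟫ + ⟪h' x, x - y⟫ := by
    rw [← inner_add_right]; congr 1; abel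
  have hA' : ⟪h' x, x - y⟫ = - ⟪h' x, y - x⟫ := by
    rw [← inner_neg_right]; congr 1; abel
  have B' : h z - h x - L / 2 * ‖z - x‖ ^ 2 ≤ ⟪h' x, z - x⟫ := by linarith [B]
  have htri : ‖y - z‖ ≤ ‖y - x‖ + ‖x - z‖ := norm_sub_le_norm_sub_add_norm_sub y x z
  have hsq : ‖y - z‖ ^ 2 ≤ (‖y - x‖ + ‖x - z‖) ^ 2 := by
    have h7 := mul_self_le_mul_self (norm_nonneg (y - z)) htri
    nlinarith [h7]
  have hrev1 : ‖y - x‖ = ‖x - y‖ := norm_sub_rev y x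
  have hrev2 : ‖x - z‖ = ‖z - x‖ := norm_sub_rev x z
  rw [hrev1, hrev2] at hsq
  rw [hrev1] at A
  rw [hsplit, hA']
  have t1 : 0 ≤ μ * (‖x - y‖ - ‖z - x‖) ^ 2 := mul_nonneg hμ (sq_nonneg _)
  have t2 : 0 ≤ (L - μ) * ‖z - x‖ ^ 2 := mul_nonneg (by linarith) (sq_nonneg _)
  have t3 := mul_le_mul_of_nonneg_left hsq (by linarith : (0:ℝ) ≤ μ / 4)
  nlinarith [A, B', t1, t2, t3]
end

section
/- (Optimal weighting of rounds) For fixed D, R > 0 and integer t ≥ 1, the minimum over probability vectors (p_1,...,p_t) (p_τ ≥ 0, ∑_{τ=1}^t p_τ = 1) of the objective (1 − p_t)²R² + D²∑_{τ=1}^t p_τ² is attained at p_τ = D²/(tD² + (t−1)R²) for τ < t and p_t = ((t−1)R² + D²)/(tD² + (t−1)R²), with minimal value D²·(D² + (t−1)R²)/(tD² + (t−1)R²). -/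
open scoped BigOperators

theorem optimal_weighting_of_rounds (n : ℕ) (D R : ℝ) (hD : 0 < D) (hR : 0 < R) :
    (∀ q : Fin (n + 1) → ℝ, (∀ τ, 0 ≤ q τ) → ∑ τ, q τ = 1 →
      D ^ 2 * (D ^ 2 + (n : ℝ) * R ^ 2) / (((n : ℝ) + 1) * D ^ 2 + (n : ℝ) * R ^ 2) ≤
        (1 - q (Fin.last n)) ^ 2 * R ^ 2 + D ^ 2 * ∑ τ, q τ ^ 2) ∧
    (∀ p : Fin (n + 1) → ℝ,
      (p = fun τ => if τ = Fin.last n then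
          ((n : ℝ) * R ^ 2 + D ^ 2) / (((n : ℝ) + 1) * D ^ 2 + (n : ℝ) * R ^ 2)
        else D ^ 2 / (((n : ℝ) + 1) * D ^ 2 + (n : ℝ) * R ^ 2)) →
      (∀ τ, 0 ≤ p τ) ∧ ∑ τ, p τ = 1 ∧
      (1 - p (Fin.last n)) ^ 2 * R ^ 2 + D ^ 2 * ∑ τ, p τ ^ 2 =
        D ^ 2 * (D ^ 2 + (n : ℝ) * R ^ 2) / (((n : ℝ) + 1) * D ^ 2 + (n : ℝ) * R ^ 2)) := by
  have hS : (0:ℝ) < ((n : ℝ) + 1) * D ^ 2 + (n : ℝ) * R ^ 2 := by positivity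
  have hS' : (((n : ℝ) + 1) * D ^ 2 + (n : ℝ) * R ^ 2) ≠ 0 := ne_of_gt hS
  set S : ℝ := ((n : ℝ) + 1) * D ^ 2 + (n : ℝ) * R ^ 2 with hSdef
  set c : ℝ := D ^ 2 / S with hc
  set pL : ℝ := ((n : ℝ) * R ^ 2 + D ^ 2) / S with hpL
  constructor
  · intro q hq hsum
    set qL : ℝ := q (Fin.last n) with hqL
    -- sum of squared deviations
    have h1 : ∀ τ : Fin (n + 1), (q τ - (if τ = Fin.last n then pL else c)) ^ 2
        = (q τ - c) ^ 2 - (if τ = Fin.last n then 2 * (pL - c) * (q τ - c) - (pL - c) ^ 2 else 0) := by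
      intro τ
      by_cases h : τ = Fin.last n <;> simp [h] <;> ring
    have h2 : ∑ τ, (q τ - (if τ = Fin.last n then pL else c)) ^ 2
        = (∑ τ, (q τ - c) ^ 2) - (2 * (pL - c) * (qL - c) - (pL - c) ^ 2) := by
      rw [Finset.sum_congr rfl fun τ _ => h1 τ, Finset.sum_sub_distrib]
      congr 1
      rw [Finset.sum_ite_eq' Finset.univ (Fin.last n)
        (fun τ => 2 * (pL - c) * (q τ - c) - (pL - c) ^ 2)]
      simp [hqL]
    have h3 : ∑ τ, (q τ - c) ^ 2
        = (∑ τ, q τ ^ 2) - 2 * c * (∑ τ, q τ) + ((n : ℝ) + 1) * c ^ 2 := by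
      have : ∀ τ : Fin (n + 1), (q τ - c) ^ 2 = q τ ^ 2 - 2 * c * q τ + c ^ 2 := by
        intro τ; ring
      rw [Finset.sum_congr rfl fun τ _ => this τ]
      rw [Finset.sum_add_distrib, Finset.sum_sub_distrib, ← Finset.mul_sum,
        Finset.sum_const, Finset.card_univ]
      simp
    have hnn : 0 ≤ ∑ τ, (q τ - (if τ = Fin.last n then pL else c)) ^ 2 :=
      Finset.sum_nonneg fun τ _ => sq_nonneg _
    rw [h2, h3, hsum] at hnn
    have hid : (1 - qL) ^ 2 * R ^ 2 + D ^ 2 * ∑ τ, q τ ^ 2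
        = D ^ 2 * (D ^ 2 + (n : ℝ) * R ^ 2) / S + R ^ 2 * (qL - pL) ^ 2
          + D ^ 2 * ((∑ τ, q τ ^ 2) - 2 * c * 1 + ((n : ℝ) + 1) * c ^ 2
            - (2 * (pL - c) * (qL - c) - (pL - c) ^ 2)) := by
      rw [hc, hpL, hSdef]
      field_simp
      ring
    have hR2 : 0 ≤ R ^ 2 * (qL - pL) ^ 2 := by positivity
    have hD2 : (0:ℝ) ≤ D ^ 2 := sq_nonneg D
    nlinarith [mul_nonneg hD2 hnn]
  · intro p hp
    subst hp
    refine ⟨?_, ?_, ?_⟩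
    · intro τ
      by_cases h : τ = Fin.last n <;> simp [h] <;> positivity
    · have h1 : ∀ τ : Fin (n + 1),
          (if τ = Fin.last n then pL else c) = c + (if τ = Fin.last n then pL - c else 0) := by
        intro τ; by_cases h : τ = Fin.last n <;> simp [h]
      rw [Finset.sum_congr rfl fun τ _ => h1 τ, Finset.sum_add_distrib,
        Finset.sum_ite_eq' Finset.univ (Fin.last n) (fun _ => pL - c),
        Finset.sum_const, Finset.card_univ]
      simp only [Fintype.card_fin, Finset.mem_univ, if_true, nsmul_eq_mul, Nat.cast_add, Nat.cast_one]
      rw [hc, hpL, hSdef]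
      field_simp
      ring
    · have h1 : ∀ τ : Fin (n + 1),
          (if τ = Fin.last n then pL else c) ^ 2
            = c ^ 2 + (if τ = Fin.last n then pL ^ 2 - c ^ 2 else 0) := by
        intro τ; by_cases h : τ = Fin.last n <;> simp [h]
      rw [Finset.sum_congr rfl fun τ _ => h1 τ, Finset.sum_add_distrib,
        Finset.sum_ite_eq' Finset.univ (Fin.last n) (fun _ => pL ^ 2 - c ^ 2),
        Finset.sum_const, Finset.card_univ]
      simp only [Fintype.card_fin, Finset.mem_univ, if_true, nsmul_eq_mul, Nat.cast_add, Nat.cast_one]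
      rw [hc, hpL, hSdef]
      field_simp
      ring
end

section
/- (Stateless variance is smaller) For all G, D, R ≥ 0 with not all zero, the stateless variance constant c_stateless = (G² + D²)R²/(G² + D² + R²) is at most the stateful variance constant c_normal = G² + D²R²/(R² + D²). -/
theorem stateless_variance_le_stateful (G D R : ℝ) (hG : 0 ≤ G) (hD : 0 ≤ D) (hR : 0 ≤ R)
    (hne : ¬(G = 0 ∧ D = 0 ∧ R = 0)) :
    (G ^ 2 + D ^ 2) * R ^ 2 / (G ^ 2 + D ^ 2 + R ^ 2) ≤
      G ^ 2 + D ^ 2 * R ^ 2 / (R ^ 2 + D ^ 2) := by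
  have hS : 0 < G ^ 2 + D ^ 2 + R ^ 2 := by
    rcases lt_or_eq_of_le hG with h | h
    · positivity
    rcases lt_or_eq_of_le hD with h2 | h2
    · positivity
    rcases lt_or_eq_of_le hR with h3 | h3
    · positivity
    exact absurd ⟨h.symm, h2.symm, h3.symm⟩ hne
  rcases eq_or_lt_of_le (by positivity : (0:ℝ) ≤ R ^ 2 + D ^ 2) with h | h
  · have hR0 : R = 0 := by nlinarith [sq_nonneg R, sq_nonneg D]
    have hD0 : D = 0 := by nlinarith [sq_nonneg R, sq_nonneg D]
    rw [hR0, hD0]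
    simp
    positivity
  · have heq : G ^ 2 + D ^ 2 * R ^ 2 / (R ^ 2 + D ^ 2)
        = (G ^ 2 * (R ^ 2 + D ^ 2) + D ^ 2 * R ^ 2) / (R ^ 2 + D ^ 2) := by
      field_simp
    rw [heq, div_le_div_iff₀ hS h]
    nlinarith [sq_nonneg (G*R), sq_nonneg (G*D), sq_nonneg (D*R), sq_nonneg G, sq_nonneg D, sq_nonneg R, mul_nonneg (sq_nonneg G) (sq_nonneg D)]
end

section
/- (Step-size condition for contraction) Let c ≥ 1, L > 0, and η satisfy 0 < η ≤ (√(3η_g² + 4cη_g⁴) − √(4cη_g⁴))/(6L√c) with η_g = 1. Writing K η_l = η, it holds that 1 − 4K²η_l²L²c > 0 and the quadratic inequality −2η + 16η²Lc + 16K²ηη_l²L²c(1 + 4ηLc)/(1 − 4K²η_l²L²c) ≤ 0 is satisfied. -/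
theorem stepsize_condition_for_contraction (c L : ℝ) (hc : 1 ≤ c) (hL : 0 < L)
    (K : ℕ) (hK : 1 ≤ K) (ηl η : ℝ) (hηl : 0 < ηl) (hη : η = (K : ℝ) * ηl)
    (hbound : η ≤ (Real.sqrt (3 + 4 * c) - Real.sqrt (4 * c)) / (6 * L * Real.sqrt c)) :
    0 < 1 - 4 * (K : ℝ) ^ 2 * ηl ^ 2 * L ^ 2 * c ∧
      -2 * η + 16 * η ^ 2 * L * c +
          16 * (K : ℝ) ^ 2 * η * ηl ^ 2 * L ^ 2 * c * (1 + 4 * η * L * c) /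
            (1 - 4 * (K : ℝ) ^ 2 * ηl ^ 2 * L ^ 2 * c) ≤ 0 := by
  have hc0 : (0:ℝ) < c := lt_of_lt_of_le one_pos hc
  set s := Real.sqrt c with hs
  have hs1 : 1 ≤ s := by
    rw [hs, show (1:ℝ) = Real.sqrt 1 by simp]
    exact Real.sqrt_le_sqrt hc
  have hs0 : 0 < s := lt_of_lt_of_le one_pos hs1
  have hss : s * s = c := Real.mul_self_sqrt hc0.le
  have hKpos : (0:ℝ) < (K:ℝ) := by exact_mod_cast Nat.pos_of_ne_zero (by omega)
  have hηpos : 0 < η := by rw [hη]; positivity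
  have hKη : (K:ℝ)^2 * ηl^2 = η^2 := by rw [hη]; ring
  have h4c : Real.sqrt (4 * c) = 2 * s := by
    rw [hs, show (4:ℝ) * c = 2^2 * c by ring, Real.sqrt_mul (by positivity),
      Real.sqrt_sq (by norm_num)]
  -- from bound: 6ηLs + 2s ≤ √(3+4c)
  have h1 : 6 * η * L * s + 2 * s ≤ Real.sqrt (3 + 4 * c) := by
    have hd : (0:ℝ) < 6 * L * s := by positivity
    rw [h4c] at hbound
    have := (le_div_iff₀ hd).mp hbound
    nlinarith
  have hsq : (6 * η * L * s + 2 * s)^2 ≤ 3 + 4 * c := by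
    have h2 : 0 ≤ 6 * η * L * s + 2 * s := by positivity
    nlinarith [Real.sq_sqrt (show (0:ℝ) ≤ 3 + 4 * c by positivity), h1,
      Real.sqrt_nonneg (3 + 4 * c)]
  -- key: 12 u^2 + 8 u s ≤ 1 with u = ηLs
  have hkey : 12 * (η * L * s)^2 + 8 * (η * L * s) * s ≤ 1 := by nlinarith [hss]
  have hupos : 0 < η * L * s := by positivity
  have hDeq : 1 - 4 * (K : ℝ) ^ 2 * ηl ^ 2 * L ^ 2 * c = 1 - 4 * η^2 * L^2 * c := by
    rw [hη]; ring
  have hnum : 16 * (K : ℝ) ^ 2 * η * ηl ^ 2 * L ^ 2 * c = 16 * η^3 * L^2 * c := by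
    rw [hη]; ring
  have hD : 0 < 1 - 4 * η^2 * L^2 * c := by
    nlinarith [hss, hupos, mul_pos hupos hs0]
  rw [hDeq, hnum]
  refine ⟨hD, ?_⟩
  have hmain : 16 * η ^ 3 * L ^ 2 * c * (1 + 4 * η * L * c) / (1 - 4 * η ^ 2 * L ^ 2 * c)
      ≤ 2 * η - 16 * η ^ 2 * L * c := by
    rw [div_le_iff₀ hD, ← hss]
    nlinarith [mul_nonneg hηpos.le (by linarith : (0:ℝ) ≤ 1 - (12 * (η * L * s) ^ 2 + 8 * (η * L * s) * s))]
  linarith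
end
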